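/- Let m ≥ 1 be an integer and α > 0 a real number. Define u : ℝ^m → ℝ² by u(x) = (cos(‖x‖^{−α}), sin(‖x‖^{−α})), where ℝ² = EuclideanSpace ℝ (Fin 2) carries the Euclidean norm. Then for every x ∈ ℝ^m with x ≠ 0, u is differentiable at x and ‖fderiv ℝ u x‖ = α · ‖x‖^{−α−1}. -/

import Mathlib

/-- The circle-valued lift `u(x) = (cos (v x), sin (v x)) ∈ ℝ²` of `v : E → ℝ`,
where `ℝ² = EuclideanSpace ℝ (Fin 2)`. -/
noncomputable def circleLift {E : Type*} (v : E → ℝ) (x : E) : EuclideanSpace ℝ (Fin 2) :=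
  (WithLp.equiv 2 (Fin 2 → ℝ)).symm ![Real.cos (v x), Real.sin (v x)]

/-- For `u(x) = (cos(‖x‖^{-α}), sin(‖x‖^{-α}))` on `ℝᵐ` and `x ≠ 0`, the map `u`
is differentiable at `x` and `‖Du(x)‖ = α ‖x‖^{-α-1}`. -/
theorem circleLift_rpow_fderiv_norm (m : ℕ) (hm : 1 ≤ m) (α : ℝ) (hα : 0 < α)
    (x : EuclideanSpace ℝ (Fin m)) (hx : x ≠ 0) :
    DifferentiableAt ℝ (circleLift fun y : EuclideanSpace ℝ (Fin m) => ‖y‖ ^ (-α)) x ∧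
      ‖fderiv ℝ (circleLift fun y : EuclideanSpace ℝ (Fin m) => ‖y‖ ^ (-α)) x‖ =
        α * ‖x‖ ^ (-α - 1) := by
  have : Nontrivial (EuclideanSpace ℝ (Fin m)) := by
    have : 0 < m := hm
    exact ⟨x, 0, hx⟩
  have hx' : (0 : ℝ) < ‖x‖ := norm_pos_iff.mpr hx
  -- derivative of the norm
  have hn : DifferentiableAt ℝ (fun y : EuclideanSpace ℝ (Fin m) => ‖y‖) x :=
    (contDiffAt_norm ℝ (n := 1) hx).differentiableAt one_ne_zero
  set N := fderiv ℝ (fun y : EuclideanSpace ℝ (Fin m) => ‖y‖) x with hN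
  have hNnorm : ‖N‖ = 1 := norm_fderiv_norm hn
  -- derivative of v
  set c : ℝ := -α * ‖x‖ ^ (-α - 1) with hc
  have hg : HasDerivAt (fun t : ℝ => t ^ (-α)) c ‖x‖ := by
    simpa [hc] using Real.hasDerivAt_rpow_const (x := ‖x‖) (p := -α) (Or.inl hx'.ne')
  have hv : HasFDerivAt (fun y : EuclideanSpace ℝ (Fin m) => ‖y‖ ^ (-α)) (c • N) x := by
    have := hg.comp_hasFDerivAt x hn.hasFDerivAt
    exact this
  -- derivative of t ↦ (cos t, sin t)
  set L := (PiLp.continuousLinearEquiv 2 ℝ (fun _ : Fin 2 => ℝ)).symm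
  have hf : ∀ t : ℝ, HasDerivAt
      (fun s : ℝ => (WithLp.equiv 2 (Fin 2 → ℝ)).symm ![Real.cos s, Real.sin s])
      ((WithLp.equiv 2 (Fin 2 → ℝ)).symm ![-Real.sin t, Real.cos t]) t := by
    intro t
    have h1 : HasDerivAt (fun s : ℝ => ![Real.cos s, Real.sin s] : ℝ → Fin 2 → ℝ)
        ![-Real.sin t, Real.cos t] t := by
      rw [hasDerivAt_pi]
      intro i
      fin_cases i
      · simpa using Real.hasDerivAt_cos t
      · simpa using Real.hasDerivAt_sin t
    exact L.toContinuousLinearMap.hasFDerivAt.comp_hasDerivAt t h1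
  -- compose
  set w := (WithLp.equiv 2 (Fin 2 → ℝ)).symm ![-Real.sin (‖x‖ ^ (-α)), Real.cos (‖x‖ ^ (-α))] with hw
  have hu : HasFDerivAt (circleLift fun y : EuclideanSpace ℝ (Fin m) => ‖y‖ ^ (-α))
      ((c • N).smulRight w) x := by
    have h3 := ((hf (‖x‖ ^ (-α))).hasFDerivAt).comp x hv
    have h4 : (ContinuousLinearMap.toSpanSingleton ℝ w).comp (c • N)
        = (c • N).smulRight w := by ext y; simp [mul_assoc]
    rw [h4] at h3
    exact h3
  refine ⟨hu.differentiableAt, ?_⟩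
  rw [hu.fderiv, ContinuousLinearMap.norm_smulRight_apply]
  have hwnorm : ‖w‖ = 1 := by
    rw [hw, EuclideanSpace.norm_eq]
    simp only [WithLp.equiv_symm_apply, WithLp.ofLp_toLp, Fin.sum_univ_two, Matrix.cons_val_zero,
      Matrix.cons_val_one, Matrix.head_cons, Real.norm_eq_abs, sq_abs, neg_sq]
    rw [Real.sin_sq_add_cos_sq, Real.sqrt_one]
  rw [hwnorm, mul_one, norm_smul, hNnorm, mul_one, hc, Real.norm_eq_abs, abs_mul,
    abs_neg, abs_of_pos hα, abs_of_pos (Real.rpow_pos_of_pos hx' _)]
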